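/- Let Λ be a finite 𝔽_q-subspace of a field L containing 𝔽_q, of dimension n with basis ω₁,...,ωₙ. Then the product of all nonzero elements of Λ equals (-1)^n · M(ω₁,...,ωₙ)^{q-1}. -/
import Mathlib

open Polynomial Matrix Finset in
/-- If `Λ` is an `n`-dimensional `𝔽_q`-subspace of a field `L ⊇ 𝔽_q` with
basis `ω₁,…,ωₙ`, then the product of all nonzero elements of `Λ` equals
`(-1)^n · M(ω₁,…,ωₙ)^{q-1}`, `M` being the Moore determinant. -/
theorem prod_nonzero_eq_neg_one_pow_mul_moore_pow
    {F L : Type*} [Field F] [Fintype F] [Field L] [Algebra F L] [DecidableEq L]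
    (q : ℕ) (hq : Fintype.card F = q) (n : ℕ) (ω : Fin n → L)
    (hind : LinearIndependent F ω)
    (Λ : Finset L)
    (hΛ : (Λ : Set L) = (Submodule.span F (Set.range ω) : Set L)) :
    ∏ l ∈ Λ.erase 0, l =
      (-1 : L) ^ n *
        Matrix.det (Matrix.of fun i j : Fin n => ω i ^ q ^ (j : ℕ)) ^ (q - 1) := by
  classical
  cases n with
  | zero =>
    have hΛ0 : Λ = {0} := by
      apply Finset.coe_injective
      rw [hΛ]
      simp
    subst hΛ0
    simp [Matrix.det_fin_zero]
  | succ m =>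
  -- characteristic setup
  set p := ringChar F with hpdef
  obtain ⟨k, hp, hk⟩ := FiniteField.card F p
  rw [hq] at hk
  haveI : Fact p.Prime := ⟨hp⟩
  haveI hchL : CharP L p := charP_of_injective_algebraMap (algebraMap F L).injective p
  haveI : ExpChar L p := .prime hp
  have hq2 : 2 ≤ q := by rw [← hq]; exact Fintype.one_lt_card
  -- Frobenius facts
  have hpow_add : ∀ (j : ℕ) (x y : L), (x + y) ^ q ^ j = x ^ q ^ j + y ^ q ^ j := by
    intro j x y
    rw [hk, ← pow_mul]
    exact add_pow_char_pow x y p (↑k * j)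
  have hFfix : ∀ (j : ℕ) (a : F), a ^ q ^ j = a := by
    intro j a
    induction j with
    | zero => simp
    | succ j ih => rw [pow_succ, pow_mul, ih, ← hq, FiniteField.pow_card]
  have hpow_smul : ∀ (j : ℕ) (a : F) (x : L), (a • x) ^ q ^ j = a • x ^ q ^ j := by
    intro j a x
    rw [Algebra.smul_def, mul_pow, Algebra.smul_def, ← map_pow, hFfix]
  -- the key vanishing lemma
  have key : ∀ (N : ℕ) (e : Fin N → ℕ) (a : Fin N → L),
      (∀ i, ∑ j, a j * ω i ^ q ^ (e j) = 0) →
      ∀ x ∈ Λ, ∑ j, a j * x ^ q ^ (e j) = 0 := by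
    intro N e a h x hx
    let φ : L →ₗ[F] L :=
      { toFun := fun x => ∑ j, a j * x ^ q ^ (e j)
        map_add' := by intro x y; simp [hpow_add, mul_add, Finset.sum_add_distrib]
        map_smul' := by intro r x; simp [hpow_smul, mul_smul_comm, Finset.smul_sum] }
    have hle : Submodule.span F (Set.range ω) ≤ LinearMap.ker φ := by
      rw [Submodule.span_le]; rintro _ ⟨i, rfl⟩; exact h i
    have hx' : x ∈ Submodule.span F (Set.range ω) := by
      have : x ∈ (Submodule.span F (Set.range ω) : Set L) := by rw [← hΛ]; exact_mod_cast hx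
      exact this
    exact hle hx'
  -- membership facts
  have h0Λ : (0 : L) ∈ Λ := by
    have : (0:L) ∈ (Submodule.span F (Set.range ω) : Set L) := Submodule.zero_mem _
    rw [← hΛ] at this; exact_mod_cast this
  -- cardinality
  have hcard : Λ.card = q ^ (m+1) := by
    have hfin : (Submodule.span F (Set.range ω) : Set L).Finite := by
      rw [← hΛ]; exact Λ.finite_toSet
    haveI : Fintype (Submodule.span F (Set.range ω)) := hfin.fintype
    have h1 : Λ.card = Fintype.card (Submodule.span F (Set.range ω)) :=
      calc Λ.card = (Λ : Set L).ncard := (Set.ncard_coe_finset Λ).symm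
        _ = ((Submodule.span F (Set.range ω) : Set L)).ncard := by rw [hΛ]
        _ = Nat.card ((Submodule.span F (Set.range ω) : Set L)) :=
            (Nat.card_coe_set_eq _).symm
        _ = Nat.card (Submodule.span F (Set.range ω)) :=
            Nat.card_congr (Equiv.subtypeEquivRight fun x => SetLike.mem_coe)
        _ = Fintype.card (Submodule.span F (Set.range ω)) := Nat.card_eq_fintype_card
    rw [h1, Module.card_eq_pow_finrank (K := F), finrank_span_eq_card hind, Fintype.card_fin, hq]
  have hqmlt : q ^ m < q ^ (m+1) := Nat.pow_lt_pow_right hq2 m.lt_succ_self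
  -- the Moore matrix
  set A : Matrix (Fin (m+1)) (Fin (m+1)) L :=
    Matrix.of (fun i j : Fin (m+1) => ω i ^ q ^ (j : ℕ)) with hA
  -- degree bound helper
  have hdeg_aux : ∀ w : Fin (m+1) → L,
      (∑ j : Fin (m+1), Polynomial.C (w j) * Polynomial.X ^ q ^ (j:ℕ)).natDegree ≤ q ^ m := by
    intro w
    apply Polynomial.natDegree_sum_le_of_forall_le
    intro j _
    refine (Polynomial.natDegree_C_mul_le _ _).trans ?_
    rw [Polynomial.natDegree_X_pow]
    exact Nat.pow_le_pow_right (by omega) (by omega)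
  -- coefficient extraction helper
  have hcoeff_aux : ∀ (w : Fin (m+1) → L) (j : Fin (m+1)),
      (∑ i : Fin (m+1), Polynomial.C (w i) * Polynomial.X ^ q ^ (i:ℕ)).coeff (q ^ (j:ℕ)) = w j := by
    intro w j
    rw [Polynomial.finset_sum_coeff, Finset.sum_eq_single j]
    · simp [Polynomial.coeff_X_pow]
    · intro b _ hbj
      simp only [Polynomial.coeff_C_mul, Polynomial.coeff_X_pow]
      rw [if_neg, mul_zero]
      intro h
      exact hbj (Fin.ext (Nat.pow_right_injective hq2 h.symm))
    · simp
  -- Moore determinant nonzero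
  have hMne : A.det ≠ 0 := by
    intro h0
    obtain ⟨v, hv0, hveq⟩ := Matrix.exists_mulVec_eq_zero_iff.mpr h0
    set g : Polynomial L := ∑ j : Fin (m+1), Polynomial.C (v j) * Polynomial.X ^ q ^ (j:ℕ)
      with hgdef
    have hgeval : ∀ x ∈ Λ, g.eval x = 0 := by
      intro x hx
      have h1 := key (m+1) (fun j => (j:ℕ)) v ?_ x hx
      · rw [hgdef]
        rw [Polynomial.eval_finset_sum]
        simpa using h1
      · intro i
        have h2 := congrFun hveq i
        simp only [Matrix.mulVec, dotProduct, Pi.zero_apply, hA, Matrix.of_apply] at h2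
        rw [← h2]
        exact Finset.sum_congr rfl fun j _ => mul_comm _ _
    have hgdeg : g.natDegree < Λ.card := by
      rw [hcard]
      exact lt_of_le_of_lt (hdeg_aux v) hqmlt
    have hg0 : g = 0 :=
      Polynomial.eq_zero_of_natDegree_lt_card_of_eval_eq_zero' g Λ hgeval hgdeg
    apply hv0
    funext j
    have := hcoeff_aux v j
    rw [← hgdef, hg0] at this
    simpa using this.symm
  have hMunit : IsUnit A.det := isUnit_iff_ne_zero.mpr hMne
  -- the coefficients c
  set c : Fin (m+1) → L := (A⁻¹).mulVec (fun i => ω i ^ q ^ (m+1)) with hcdef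
  have hc : ∀ i, ∑ j : Fin (m+1), ω i ^ q ^ (j:ℕ) * c j = ω i ^ q ^ (m+1) := by
    have h1 : A.mulVec c = fun i => ω i ^ q ^ (m+1) := by
      rw [hcdef, Matrix.mulVec_mulVec, Matrix.mul_nonsing_inv A hMunit, Matrix.one_mulVec]
    intro i
    have h2 := congrFun h1 i
    simpa [Matrix.mulVec, dotProduct, hA] using h2
  -- the polynomial f
  set f : Polynomial L :=
    Polynomial.X ^ q ^ (m+1) - ∑ j : Fin (m+1), Polynomial.C (c j) * Polynomial.X ^ q ^ (j:ℕ)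
    with hfdef
  have hfeval : ∀ x ∈ Λ, f.eval x = 0 := by
    intro x hx
    have h1 := key (m+2) (Fin.snoc (fun j : Fin (m+1) => (j:ℕ)) (m+1))
      (Fin.snoc (fun j : Fin (m+1) => -(c j)) 1) ?_ x hx
    · rw [Fin.sum_univ_castSucc] at h1
      simp only [Fin.snoc_castSucc, Fin.snoc_last, one_mul, neg_mul] at h1
      rw [Finset.sum_neg_distrib] at h1
      rw [hfdef]
      rw [Polynomial.eval_sub, Polynomial.eval_pow, Polynomial.eval_X,
        Polynomial.eval_finset_sum]
      simp only [Polynomial.eval_mul, Polynomial.eval_C, Polynomial.eval_pow,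
        Polynomial.eval_X]
      linear_combination h1
    · intro i
      rw [Fin.sum_univ_castSucc]
      simp only [Fin.snoc_castSucc, Fin.snoc_last, one_mul, neg_mul]
      rw [Finset.sum_neg_distrib]
      have h3 := hc i
      have h4 : ∑ j : Fin (m+1), c j * ω i ^ q ^ (j:ℕ)
          = ∑ j : Fin (m+1), ω i ^ q ^ (j:ℕ) * c j :=
        Finset.sum_congr rfl fun j _ => mul_comm _ _
      rw [h4, h3]
      ring
  have hfmonic : f.Monic := by
    rw [hfdef]
    apply Polynomial.monic_X_pow_sub
    calc (∑ j : Fin (m+1), Polynomial.C (c j) * Polynomial.X ^ q ^ (j:ℕ)).degree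
        ≤ ((∑ j : Fin (m+1), Polynomial.C (c j) * Polynomial.X ^ q ^ (j:ℕ)).natDegree : WithBot ℕ) :=
          Polynomial.degree_le_natDegree
      _ < (q ^ (m+1) : ℕ) := by
          exact_mod_cast lt_of_le_of_lt (hdeg_aux c) hqmlt
  have hfne : f ≠ 0 := hfmonic.ne_zero
  have hfdeg : f.natDegree = q ^ (m+1) := by
    rw [hfdef, Polynomial.natDegree_sub_eq_left_of_natDegree_lt, Polynomial.natDegree_X_pow]
    rw [Polynomial.natDegree_X_pow]
    exact lt_of_le_of_lt (hdeg_aux c) hqmlt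
  -- f is the product of X - λ
  set g : Polynomial L := ∏ l ∈ Λ, (Polynomial.X - Polynomial.C l) with hgdef
  have hgmonic : g.Monic :=
    Polynomial.monic_prod_of_monic _ _ fun l _ => Polynomial.monic_X_sub_C l
  have hgdeg : g.natDegree = q ^ (m+1) := by
    rw [hgdef, Polynomial.natDegree_prod _ _ (fun l _ => Polynomial.X_sub_C_ne_zero l)]
    simp [Polynomial.natDegree_X_sub_C, hcard]
  have hdvd : g ∣ f := by
    have h1 : (Λ.val.map (fun a => Polynomial.X - Polynomial.C a)).prod ∣ f := by
      rw [Multiset.prod_X_sub_C_dvd_iff_le_roots hfne]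
      refine (Multiset.le_iff_subset Λ.nodup).2 ?_
      intro x hx
      rw [Polynomial.mem_roots hfne]
      exact hfeval x hx
    rw [hgdef, Finset.prod_eq_multiset_prod]
    exact h1
  have hfg : f = g :=
    Polynomial.eq_of_monic_of_dvd_of_natDegree_le hgmonic hfmonic hdvd
      (by rw [hfdeg, hgdeg])
  -- sign fact
  have hsign : (-1 : L) ^ (q ^ (m+1) - 1) = 1 := by
    rcases Nat.even_or_odd q with hqe | hqo
    · have h2 : (2:ℕ) ∣ p ^ (k:ℕ) := by rw [← hk]; exact hqe.two_dvd
      have hp2 : p = 2 :=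
        ((Nat.prime_dvd_prime_iff_eq Nat.prime_two hp).1 (Nat.prime_two.dvd_of_dvd_pow h2)).symm
      haveI : CharP L 2 := hp2 ▸ hchL
      have hneg : (-1 : L) = 1 := CharTwo.neg_eq 1
      rw [hneg, one_pow]
    · have heven : Even (q ^ (m+1) - 1) :=
        Nat.Odd.sub_odd (hqo.pow) odd_one
      exact heven.neg_one_pow
  -- the value of c 0
  have hc0 : c 0 = - ∏ l ∈ Λ.erase 0, l := by
    have h1 : f.coeff 1 = - c 0 := by
      rw [hfdef, Polynomial.coeff_sub, Polynomial.coeff_X_pow,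
        if_neg (Nat.one_lt_pow (Nat.succ_ne_zero m) hq2).ne]
      have h2 := hcoeff_aux c 0
      simp only [Fin.val_zero, pow_zero] at h2
      rw [h2, zero_sub]
    have h2 : g.coeff 1 = ∏ l ∈ Λ.erase 0, l := by
      rw [hgdef, ← Finset.mul_prod_erase Λ _ h0Λ, map_zero, sub_zero,
        Polynomial.coeff_X_mul, Polynomial.coeff_zero_eq_eval_zero,
        Polynomial.eval_prod]
      simp only [Polynomial.eval_sub, Polynomial.eval_X, Polynomial.eval_C, zero_sub]
      have h3 : ∀ l ∈ Λ.erase 0, -l = (-1) * l := fun l _ => by ring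
      rw [Finset.prod_congr rfl h3, Finset.prod_mul_distrib, Finset.prod_const,
        Finset.card_erase_of_mem h0Λ, hcard, hsign, one_mul]
    have h4 : f.coeff 1 = g.coeff 1 := by rw [hfg]
    rw [h1, h2] at h4
    linear_combination -h4
  -- determinant computation
  set σ : Equiv.Perm (Fin (m+1)) := finRotate (m+1) with hσ
  set A' : Matrix (Fin (m+1)) (Fin (m+1)) L := A.submatrix id σ with hA'
  have hB : A.det ^ q = (A.map (iterateFrobenius L p k)).det := by
    rw [show A.map (iterateFrobenius L p ↑k) = (iterateFrobenius L p ↑k).mapMatrix A from rfl,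
      ← RingHom.map_det, iterateFrobenius_def, ← hk]
  have hBval : A.map (iterateFrobenius L p ↑k)
      = A'.updateCol (Fin.last m) (fun i => ω i ^ q ^ (m+1)) := by
    ext i j
    rw [Matrix.map_apply, iterateFrobenius_def, ← hk]
    by_cases hj : j = Fin.last m
    · subst hj
      rw [Matrix.updateCol_self]
      rw [hA]
      simp only [Matrix.of_apply, Fin.val_last]
      rw [← pow_mul, ← pow_succ]
    · rw [Matrix.updateCol_ne hj]
      rw [hA', Matrix.submatrix_apply, id, hσ, finRotate_succ_apply, hA]
      simp only [Matrix.of_apply]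
      rw [← pow_mul, ← pow_succ]
      congr 2
      exact (Fin.val_add_one_of_lt (lt_of_le_of_ne (Fin.le_last j) hj)).symm
  have hupd : (fun i => ω i ^ q ^ (m+1)) = (fun i => ∑ j, (fun j => c (σ j)) j • A' i j) := by
    funext i
    rw [← hc i]
    rw [← Equiv.sum_comp σ (fun j => ω i ^ q ^ (j:ℕ) * c j)]
    refine (Finset.sum_congr rfl fun j _ => ?_).symm
    rw [hA', Matrix.submatrix_apply, id, hA]
    simp only [Matrix.of_apply, smul_eq_mul]
    ring
  have hσlast : σ (Fin.last m) = 0 := by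
    rw [hσ, finRotate_succ_apply]
    exact Fin.last_add_one m
  have hdetB : (A'.updateCol (Fin.last m) (fun i => ω i ^ q ^ (m+1))).det
      = c 0 * ((-1:L)^m * A.det) := by
    rw [hupd, Matrix.det_updateCol_sum A' (Fin.last m) (fun j => c (σ j))]
    rw [hσlast]
    rw [hA', Matrix.det_permute' σ A, hσ, sign_finRotate]
    simp only [smul_eq_mul]
    norm_num
  -- putting everything together
  have hmain : A.det ^ q = c 0 * ((-1:L)^m * A.det) := by
    rw [hB, hBval, hdetB]
  rw [hc0] at hmain
  have hq1 : q - 1 + 1 = q := by omega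
  have h2 : A.det ^ (q-1) * A.det = ((-1:L)^(m+1) * ∏ l ∈ Λ.erase 0, l) * A.det := by
    rw [← pow_succ, hq1, hmain]
    ring
  have h3 : A.det ^ (q-1) = (-1:L)^(m+1) * ∏ l ∈ Λ.erase 0, l :=
    mul_right_cancel₀ hMne h2
  rw [h3]
  have h5 : ((-1:L)^(m+1)) * ((-1:L)^(m+1)) = 1 := by
    rw [← mul_pow]
    norm_num
  calc ∏ l ∈ Λ.erase 0, l = (((-1:L)^(m+1)) * ((-1:L)^(m+1))) * ∏ l ∈ Λ.erase 0, l := by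
        rw [h5, one_mul]
    _ = (-1:L)^(m+1) * ((-1:L)^(m+1) * ∏ l ∈ Λ.erase 0, l) := by ring
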